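/- Under the planted partition model for random hypergraphs, the population hypergraph Laplacian satisfies 𝓛 = I − 𝓓^{-1/2} 𝓐 𝓓^{-1/2}, where the population adjacency matrix 𝓐 = Σ_{j=1}^{β_M} (E[h_j]/|ξ_j|) a_{ξ_j} a_{ξ_j}ᵀ can be written as 𝓐 = Z G Zᵀ − J for some symmetric matrix G ∈ ℝ^{k×k} and a diagonal matrix J ∈ ℝ^{n×n} satisfying J_{ii} = J_{jj} whenever ψ_i = ψ_j. Furthermore, 𝓛 has k eigenvalues whose corresponding orthonormal eigenvectors are the columns of the matrix 𝓧 = Z(ZᵀZ)^{-1/2} U for some orthonormal matrix U ∈ ℝ^{k×k}. -/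

import Mathlib

open MeasureTheory ProbabilityTheory Matrix Finset

noncomputable section

/-- The set of all possible edges: subsets of `Fin n` of cardinality between `2` and `M`. -/
def edgeSet (n M : ℕ) : Finset (Finset (Fin n)) :=
  Finset.univ.filter fun ξ => 2 ≤ ξ.card ∧ ξ.card ≤ M

/-- Indicator vector of a possible edge. -/
def aVec {n : ℕ} (ξ : Finset (Fin n)) : Fin n → ℝ := fun i => if i ∈ ξ then 1 else 0

/-- Degree vector associated with edge weights `w`. -/
def degOf (n M : ℕ) (w : Finset (Fin n) → ℝ) (i : Fin n) : ℝ :=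
  ∑ ξ ∈ edgeSet n M, w ξ * aVec ξ i

/-- Weighted adjacency matrix `∑_ξ (w ξ/|ξ|) a_ξ a_ξᵀ`. -/
def adjOf (n M : ℕ) (w : Finset (Fin n) → ℝ) : Matrix (Fin n) (Fin n) ℝ :=
  Matrix.of fun i j => ∑ ξ ∈ edgeSet n M, (w ξ / (ξ.card : ℝ)) * (aVec ξ i * aVec ξ j)

/-- Diagonal matrix with entries `(√ d_i)⁻¹`. -/
def invSqrtDiag {n : ℕ} (dv : Fin n → ℝ) : Matrix (Fin n) (Fin n) ℝ :=
  Matrix.diagonal fun i => (Real.sqrt (dv i))⁻¹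

/-- Normalized hypergraph Laplacian associated with edge weights `w`. -/
def lapOf (n M : ℕ) (w : Finset (Fin n) → ℝ) : Matrix (Fin n) (Fin n) ℝ :=
  1 - invSqrtDiag (degOf n M w) * adjOf n M w * invSqrtDiag (degOf n M w)

/-- Minimum expected degree. -/
def dminOf (n M : ℕ) (p : Finset (Fin n) → ℝ) : ℝ := ⨅ i, degOf n M p i

/-- Assignment matrix of a partition. -/
def assign {n k : ℕ} (ψ : Fin n → Fin k) : Matrix (Fin n) (Fin k) ℝ :=
  Matrix.of fun i c => if ψ i = c then 1 else 0

/-- Size of a class. -/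
def clsSize {n k : ℕ} (ψ : Fin n → Fin k) (c : Fin k) : ℕ :=
  (Finset.univ.filter fun i => ψ i = c).card

/-- Largest class size `n₁`. -/
def maxClsSize {n k : ℕ} (ψ : Fin n → Fin k) : ℕ := Finset.univ.sup (clsSize ψ)

/-- Smallest class size `n_k`. -/
def minClsSize {n k : ℕ} (ψ : Fin n → Fin k) : ℕ := sInf (Set.range (clsSize ψ))

/-- `(ZᵀZ)^{-1/2}` for the assignment matrix `Z`. -/
def invSqrtClsDiag {n k : ℕ} (ψ : Fin n → Fin k) : Matrix (Fin k) (Fin k) ℝ :=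
  Matrix.diagonal fun c => (Real.sqrt (clsSize ψ c))⁻¹

/-- Smallest (real) eigenvalue of a matrix. -/
def lambdaMin {k : ℕ} (G : Matrix (Fin k) (Fin k) ℝ) : ℝ :=
  sInf {μ : ℝ | ∃ v : Fin k → ℝ, v ≠ 0 ∧ G.mulVec v = μ • v}

/-- The identifiability parameter `δ`. -/
def deltaParam {n k : ℕ} (M : ℕ) (ψ : Fin n → Fin k) (p : Finset (Fin n) → ℝ)
    (G : Matrix (Fin k) (Fin k) ℝ) (J : Fin n → ℝ) : ℝ :=
  lambdaMin G * (⨅ i : Fin n, (clsSize ψ (ψ i) : ℝ) / degOf n M p i)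
    - ⨆ i : Fin n, ⨆ j : Fin n, |J i / degOf n M p i - J j / degOf n M p j|

/-- Euclidean norm of a vector. -/
def vecNorm {m : Type*} [Fintype m] (v : m → ℝ) : ℝ := Real.sqrt (∑ i, v i ^ 2)

/-- Frobenius norm of a matrix. -/
def frobNorm {m l : Type*} [Fintype m] [Fintype l] (A : Matrix m l ℝ) : ℝ :=
  Real.sqrt (∑ i, ∑ j, A i j ^ 2)

/-- Spectral norm of a square matrix. -/
def specNorm {n : ℕ} (A : Matrix (Fin n) (Fin n) ℝ) : ℝ :=
  sSup {c : ℝ | ∃ v : Fin n → ℝ, vecNorm v ≤ 1 ∧ c = vecNorm (A.mulVec v)}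

/-- Row-normalized version of a matrix. -/
def rowNormalize {n k : ℕ} (X : Matrix (Fin n) (Fin k) ℝ) : Matrix (Fin n) (Fin k) ℝ :=
  Matrix.of fun i j => X i j / vecNorm (X i)

/-- `X` is a matrix of `k` leading orthonormal eigenvectors of `L`: its columns are
orthonormal eigenvectors, and every eigenvector orthogonal to them has a larger eigenvalue. -/
def LeadingEigvecs {n k : ℕ} (L : Matrix (Fin n) (Fin n) ℝ)
    (X : Matrix (Fin n) (Fin k) ℝ) : Prop :=
  Xᵀ * X = 1 ∧ ∃ Λ : Fin k → ℝ, L * X = X * Matrix.diagonal Λ ∧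
    ∀ (μ : ℝ) (v : Fin n → ℝ), v ≠ 0 → L.mulVec v = μ • v → Xᵀ.mulVec v = 0 → ∀ a, Λ a ≤ μ

/-- Membership in `𝓜_{n×k}(r)`: at most `r` distinct rows. -/
def hasAtMostRows {n k : ℕ} (r : ℕ) (S : Matrix (Fin n) (Fin k) ℝ) : Prop :=
  (Set.range fun i : Fin n => S i).ncard ≤ r

/-- The `k`-means objective `η_r(X) = min_{S ∈ 𝓜(r)} ‖X - S‖_F`. -/
def kmeansObj {n k : ℕ} (r : ℕ) (X : Matrix (Fin n) (Fin k) ℝ) : ℝ :=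
  sInf {c : ℝ | ∃ S : Matrix (Fin n) (Fin k) ℝ, hasAtMostRows r S ∧ c = frobNorm (X - S)}

/-- Number of misclassified nodes, minimized over label permutations. -/
def errCount {n k : ℕ} (ψ ψ' : Fin n → Fin k) : ℕ :=
  sInf {m : ℕ | ∃ σ : Equiv.Perm (Fin k),
    m = (Finset.univ.filter fun i => ψ i ≠ σ (ψ' i)).card}


section AuxPPD

variable {n k M : ℕ} {ψ : Fin n → Fin k} {p : Finset (Fin n) → ℝ}

lemma sum_edge_reindex (F : Finset (Fin n) → ℝ) (σ : Equiv.Perm (Fin n)) :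
    ∑ ξ ∈ edgeSet n M, F (ξ.map σ.toEmbedding) = ∑ ξ ∈ edgeSet n M, F ξ := by
  apply Finset.sum_nbij' (i := fun ξ => ξ.map σ.toEmbedding)
    (j := fun ξ => ξ.map σ.symm.toEmbedding)
  · intro a ha; simpa [edgeSet] using (by simpa [edgeSet] using ha : 2 ≤ a.card ∧ a.card ≤ M)
  · intro a ha; simpa [edgeSet] using (by simpa [edgeSet] using ha : 2 ≤ a.card ∧ a.card ≤ M)
  · intro a _; simp [Finset.map_map]
  · intro a _; simp [Finset.map_map]
  · intro a _; rfl

lemma p_map_eq (hpsym : ∀ ξ ξ' : Finset (Fin n),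
      Multiset.map ψ ξ.val = Multiset.map ψ ξ'.val → p ξ = p ξ')
    (σ : Equiv.Perm (Fin n)) (hσ : ∀ x, ψ (σ x) = ψ x) (ξ : Finset (Fin n)) :
    p (ξ.map σ.toEmbedding) = p ξ := by
  apply hpsym
  simp only [Finset.map_val, Multiset.map_map]
  exact Multiset.map_congr rfl (fun x _ => hσ x)

lemma adj_perm (hpsym : ∀ ξ ξ' : Finset (Fin n),
      Multiset.map ψ ξ.val = Multiset.map ψ ξ'.val → p ξ = p ξ')
    (σ : Equiv.Perm (Fin n)) (hσ : ∀ x, ψ (σ x) = ψ x) (i j : Fin n) :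
    adjOf n M p (σ i) (σ j) = adjOf n M p i j := by
  show ∑ ξ ∈ edgeSet n M, _ = ∑ ξ ∈ edgeSet n M, _
  rw [← sum_edge_reindex (fun ξ => (p ξ / (ξ.card : ℝ)) * (aVec ξ (σ i) * aVec ξ (σ j))) σ]
  refine Finset.sum_congr rfl fun ξ _ => ?_
  rw [p_map_eq hpsym σ hσ, Finset.card_map]
  have h1 : aVec (ξ.map σ.toEmbedding) (σ i) = aVec ξ i := by
    simp [aVec, Finset.mem_map']
  have h2 : aVec (ξ.map σ.toEmbedding) (σ j) = aVec ξ j := by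
    simp [aVec, Finset.mem_map']
  rw [h1, h2]

lemma deg_perm (hpsym : ∀ ξ ξ' : Finset (Fin n),
      Multiset.map ψ ξ.val = Multiset.map ψ ξ'.val → p ξ = p ξ')
    (σ : Equiv.Perm (Fin n)) (hσ : ∀ x, ψ (σ x) = ψ x) (i : Fin n) :
    degOf n M p (σ i) = degOf n M p i := by
  show ∑ ξ ∈ edgeSet n M, _ = ∑ ξ ∈ edgeSet n M, _
  rw [← sum_edge_reindex (fun ξ => p ξ * aVec ξ (σ i)) σ]
  refine Finset.sum_congr rfl fun ξ _ => ?_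
  rw [p_map_eq hpsym σ hσ]
  simp [aVec, Finset.mem_map']

lemma swap_psi {i i' : Fin n} (h : ψ i = ψ i') : ∀ x, ψ (Equiv.swap i i' x) = ψ x := by
  intro x
  rcases eq_or_ne x i with rfl | h1
  · rw [Equiv.swap_apply_left, h.symm]
  rcases eq_or_ne x i' with rfl | h2
  · rw [Equiv.swap_apply_right, h]
  · rw [Equiv.swap_apply_of_ne_of_ne h1 h2]

lemma pair_perm {i j i' j' : Fin n} (hij : i ≠ j) (hij' : i' ≠ j')
    (h1 : ψ i = ψ i') (h2 : ψ j = ψ j') :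
    ∃ σ : Equiv.Perm (Fin n), (∀ x, ψ (σ x) = ψ x) ∧ σ i = i' ∧ σ j = j' := by
  refine ⟨(Equiv.swap i i').trans (Equiv.swap (Equiv.swap i i' j) j'), ?_, ?_, ?_⟩
  · intro x
    simp only [Equiv.trans_apply]
    have e2 : ψ (Equiv.swap i i' j) = ψ j' := by rw [swap_psi h1 j, h2]
    rw [swap_psi e2, swap_psi h1]
  · simp only [Equiv.trans_apply, Equiv.swap_apply_left]
    apply Equiv.swap_apply_of_ne_of_ne
    · intro hc
      have : Equiv.swap i i' i = Equiv.swap i i' j := by rw [Equiv.swap_apply_left]; exact hc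
      exact hij ((Equiv.swap i i').injective this)
    · exact hij'
  · simp only [Equiv.trans_apply, Equiv.swap_apply_left]

lemma adj_pair_class (hpsym : ∀ ξ ξ' : Finset (Fin n),
      Multiset.map ψ ξ.val = Multiset.map ψ ξ'.val → p ξ = p ξ')
    {i j i' j' : Fin n} (hij : i ≠ j) (hij' : i' ≠ j')
    (h1 : ψ i = ψ i') (h2 : ψ j = ψ j') :
    adjOf n M p i j = adjOf n M p i' j' := by
  obtain ⟨σ, hσ, hi, hj⟩ := pair_perm hij hij' h1 h2
  rw [← hi, ← hj, adj_perm hpsym σ hσ]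

lemma adj_diag_class (hpsym : ∀ ξ ξ' : Finset (Fin n),
      Multiset.map ψ ξ.val = Multiset.map ψ ξ'.val → p ξ = p ξ')
    {i i' : Fin n} (h : ψ i = ψ i') :
    adjOf n M p i i = adjOf n M p i' i' := by
  have := adj_perm (M := M) hpsym (Equiv.swap i i') (swap_psi h) i i
  rw [Equiv.swap_apply_left] at this; exact this.symm

lemma deg_class (hpsym : ∀ ξ ξ' : Finset (Fin n),
      Multiset.map ψ ξ.val = Multiset.map ψ ξ'.val → p ξ = p ξ')
    {i i' : Fin n} (h : ψ i = ψ i') :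
    degOf n M p i = degOf n M p i' := by
  have := deg_perm (M := M) hpsym (Equiv.swap i i') (swap_psi h) i
  rw [Equiv.swap_apply_left] at this; exact this.symm

lemma adj_symm (i j : Fin n) : adjOf n M p i j = adjOf n M p j i := by
  show ∑ ξ ∈ edgeSet n M, _ = ∑ ξ ∈ edgeSet n M, _
  exact Finset.sum_congr rfl fun ξ _ => by ring

lemma diag_mul_assign (g : Fin k → ℝ) :
    Matrix.diagonal (g ∘ ψ) * assign ψ = assign ψ * Matrix.diagonal g := by
  ext i c
  rw [Matrix.diagonal_mul, Matrix.mul_diagonal]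
  simp only [assign, Matrix.of_apply, Function.comp_apply]
  by_cases h : ψ i = c
  · simp [h]
  · simp [h]

lemma assign_mul_diag (g : Fin k → ℝ) :
    (assign ψ)ᵀ * Matrix.diagonal (g ∘ ψ) = Matrix.diagonal g * (assign ψ)ᵀ := by
  have := congrArg Matrix.transpose (diag_mul_assign (ψ := ψ) g)
  rwa [Matrix.transpose_mul, Matrix.transpose_mul, Matrix.diagonal_transpose,
    Matrix.diagonal_transpose] at this

lemma assign_T_mul_self :
    (assign ψ)ᵀ * assign ψ = Matrix.diagonal (fun c => (clsSize ψ c : ℝ)) := by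
  ext c c'
  rw [Matrix.mul_apply, Matrix.diagonal_apply]
  simp only [Matrix.transpose_apply, assign, Matrix.of_apply]
  by_cases h : c = c'
  · subst h
    rw [if_pos rfl]
    have e : ∀ x : Fin n, (if ψ x = c then (1:ℝ) else 0) * (if ψ x = c then 1 else 0)
        = if ψ x = c then 1 else 0 := fun x => by by_cases hx : ψ x = c <;> simp [hx]
    rw [Finset.sum_congr rfl fun x _ => e x, Finset.sum_boole]
    simp [clsSize]
  · rw [if_neg h]
    apply Finset.sum_eq_zero
    intro i _
    by_cases hi : ψ i = c
    · rw [if_pos hi, one_mul, if_neg (fun hc => h (hi.symm.trans hc))]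
    · rw [if_neg hi, zero_mul]

lemma assign_mul_G_mul_T (G : Matrix (Fin k) (Fin k) ℝ) (i j : Fin n) :
    (assign ψ * G * (assign ψ)ᵀ) i j = G (ψ i) (ψ j) := by
  rw [Matrix.mul_apply]
  have h1 : ∀ c', (assign ψ * G) i c' = G (ψ i) c' := by
    intro c'
    rw [Matrix.mul_apply]
    simp only [assign, Matrix.of_apply, ite_mul, one_mul, zero_mul]
    rw [Finset.sum_ite_eq Finset.univ (ψ i) (fun c => G c c')]
    simp
  simp only [Matrix.transpose_apply, h1]
  simp only [assign, Matrix.of_apply, mul_ite, mul_one, mul_zero]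
  rw [Finset.sum_ite_eq Finset.univ (ψ j) (fun c => G (ψ i) c)]
  simp

def Gmat {n k : ℕ} (ψ : Fin n → Fin k) (A : Matrix (Fin n) (Fin n) ℝ) :
    Matrix (Fin k) (Fin k) ℝ :=
  Matrix.of fun c c' =>
    if h : ∃ q : Fin n × Fin n, q.1 ≠ q.2 ∧ ψ q.1 = c ∧ ψ q.2 = c' then
      A h.choose.1 h.choose.2
    else 0

lemma Gmat_key (hpsym : ∀ ξ ξ' : Finset (Fin n),
      Multiset.map ψ ξ.val = Multiset.map ψ ξ'.val → p ξ = p ξ')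
    (i j : Fin n) (hij : i ≠ j) :
    Gmat ψ (adjOf n M p) (ψ i) (ψ j) = adjOf n M p i j := by
  have hex : ∃ q : Fin n × Fin n, q.1 ≠ q.2 ∧ ψ q.1 = ψ i ∧ ψ q.2 = ψ j :=
    ⟨(i, j), hij, rfl, rfl⟩
  rw [Gmat, Matrix.of_apply, dif_pos hex]
  obtain ⟨hne, h1, h2⟩ := hex.choose_spec
  exact adj_pair_class hpsym hne hij h1 h2

lemma Gmat_symm (hpsym : ∀ ξ ξ' : Finset (Fin n),
      Multiset.map ψ ξ.val = Multiset.map ψ ξ'.val → p ξ = p ξ')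
    (c c' : Fin k) :
    Gmat ψ (adjOf n M p) c c' = Gmat ψ (adjOf n M p) c' c := by
  have hiff : ∀ a b : Fin k, (∃ q : Fin n × Fin n, q.1 ≠ q.2 ∧ ψ q.1 = a ∧ ψ q.2 = b) →
      (∃ q : Fin n × Fin n, q.1 ≠ q.2 ∧ ψ q.1 = b ∧ ψ q.2 = a) := by
    rintro a b ⟨q, h1, h2, h3⟩
    exact ⟨(q.2, q.1), h1.symm, h3, h2⟩
  by_cases h : ∃ q : Fin n × Fin n, q.1 ≠ q.2 ∧ ψ q.1 = c ∧ ψ q.2 = c'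
  · have h' := hiff _ _ h
    rw [Gmat, Matrix.of_apply, Matrix.of_apply, dif_pos h, dif_pos h']
    obtain ⟨a1, a2, a3⟩ := h.choose_spec
    obtain ⟨b1, b2, b3⟩ := h'.choose_spec
    rw [adj_symm (M := M) h'.choose.1 h'.choose.2]
    exact adj_pair_class hpsym a1 b1.symm (a2.trans b3.symm) (a3.trans b2.symm)
  · have h' : ¬ ∃ q : Fin n × Fin n, q.1 ≠ q.2 ∧ ψ q.1 = c' ∧ ψ q.2 = c :=
      fun hc => h (hiff _ _ hc)
    rw [Gmat, Matrix.of_apply, Matrix.of_apply, dif_neg h, dif_neg h']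

end AuxPPD

set_option maxHeartbeats 2000000 in
/-- Lemma 1: under the planted partition model, the population Laplacian is
`𝓛 = I - 𝓓^{-1/2} 𝓐 𝓓^{-1/2}`, where `𝓐 = Z G Zᵀ - J` for some symmetric `G ∈ ℝ^{k×k}` and a
diagonal `J` that is constant on the classes of `ψ`; moreover `𝓛` has `k` eigenvalues whose
orthonormal eigenvectors are the columns of `𝓧 = Z (ZᵀZ)^{-1/2} U` for an orthonormal `U`. -/
theorem population_laplacian_decomposition
    (n k M : ℕ) (hn : 0 < n) (hk : 0 < k)
    (ψ : Fin n → Fin k) (hsurj : Function.Surjective ψ)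
    (p : Finset (Fin n) → ℝ)
    (hp0 : ∀ ξ, 0 ≤ p ξ) (hp1 : ∀ ξ, p ξ ≤ 1)
    (hpcard : ∀ ξ, ξ ∉ edgeSet n M → p ξ = 0)
    (hpsym : ∀ ξ ξ' : Finset (Fin n),
      Multiset.map ψ ξ.val = Multiset.map ψ ξ'.val → p ξ = p ξ')
    (hDpos : ∀ i, 0 < degOf n M p i) :
    lapOf n M p =
      1 - invSqrtDiag (degOf n M p) * adjOf n M p * invSqrtDiag (degOf n M p) ∧
    ∃ (G : Matrix (Fin k) (Fin k) ℝ) (J : Fin n → ℝ)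
      (U : Matrix (Fin k) (Fin k) ℝ) (Λ : Fin k → ℝ),
      G.IsHermitian ∧
      (∀ i j, ψ i = ψ j → J i = J j) ∧
      adjOf n M p = assign ψ * G * (assign ψ)ᵀ - Matrix.diagonal J ∧
      Uᵀ * U = 1 ∧ U * Uᵀ = 1 ∧
      (assign ψ * invSqrtClsDiag ψ * U)ᵀ * (assign ψ * invSqrtClsDiag ψ * U) = 1 ∧
      lapOf n M p * (assign ψ * invSqrtClsDiag ψ * U) =
        (assign ψ * invSqrtClsDiag ψ * U) * Matrix.diagonal Λ := by
  classical
  refine ⟨rfl, ?_⟩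
  set Z := assign ψ with hZdef
  -- class representatives
  let s : Fin k → Fin n := Function.surjInv hsurj
  have hs : ∀ c, ψ (s c) = c := fun c => Function.surjInv_eq hsurj c
  -- the matrix G
  set A := adjOf n M p with hAdef
  let G : Matrix (Fin k) (Fin k) ℝ := Gmat ψ A
  have hGkey : ∀ i j : Fin n, i ≠ j → G (ψ i) (ψ j) = A i j :=
    fun i j hij => Gmat_key hpsym i j hij
  have hGsym : ∀ c c', G c c' = G c' c := fun c c' => Gmat_symm hpsym c c'
  have hGherm : G.IsHermitian := by
    show Gᴴ = G
    ext c c'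
    rw [Matrix.conjTranspose_apply, star_trivial]
    exact hGsym c' c
  -- the vector J
  let J : Fin n → ℝ := fun i => G (ψ i) (ψ i) - A i i
  have hJcls : ∀ i j, ψ i = ψ j → J i = J j := by
    intro i j h
    show G (ψ i) (ψ i) - A i i = G (ψ j) (ψ j) - A j j
    rw [h]
    exact congrArg (fun t => G (ψ j) (ψ j) - t) (adj_diag_class hpsym h)
  have hAdecomp : A = Z * G * Zᵀ - Matrix.diagonal J := by
    ext i j
    rw [Matrix.sub_apply, assign_mul_G_mul_T, Matrix.diagonal_apply]
    by_cases h : i = j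
    · subst h; rw [if_pos rfl]; show A i i = G (ψ i) (ψ i) - (G (ψ i) (ψ i) - A i i); ring
    · rw [if_neg h, sub_zero]; exact (hGkey i j h).symm
  -- degree diagonal
  have hdcls : ∀ i, degOf n M p i = degOf n M p (s (ψ i)) :=
    fun i => deg_class hpsym (hs (ψ i)).symm
  let fd : Fin k → ℝ := fun c => (Real.sqrt (degOf n M p (s c)))⁻¹
  have hS : invSqrtDiag (degOf n M p) = Matrix.diagonal (fd ∘ ψ) := by
    unfold invSqrtDiag
    have e : (fun i => (Real.sqrt (degOf n M p i))⁻¹) = fd ∘ ψ := by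
      funext i
      show (Real.sqrt (degOf n M p i))⁻¹ = (Real.sqrt (degOf n M p (s (ψ i))))⁻¹
      rw [← hdcls i]
    rw [e]
  let Jc : Fin k → ℝ := fun c => G c c - A (s c) (s c)
  have hJeq : J = Jc ∘ ψ := by
    funext i
    show G (ψ i) (ψ i) - A i i = G (ψ i) (ψ i) - A (s (ψ i)) (s (ψ i))
    exact congrArg (fun t => G (ψ i) (ψ i) - t) (adj_diag_class hpsym (hs (ψ i)).symm)
  -- class size diagonals
  let nc : Fin k → ℝ := fun c => (clsSize ψ c : ℝ)
  have hncpos : ∀ c, 0 < nc c := by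
    intro c
    obtain ⟨i, hi⟩ := hsurj c
    have h2 : 0 < clsSize ψ c := Finset.card_pos.mpr ⟨i, by simp [hi]⟩
    show (0:ℝ) < (clsSize ψ c : ℝ)
    exact_mod_cast h2
  let ν : Fin k → ℝ := fun c => (Real.sqrt (nc c))⁻¹
  have hNdef : invSqrtClsDiag ψ = Matrix.diagonal ν := rfl
  have hsqrtpos : ∀ c, 0 < Real.sqrt (nc c) := fun c => Real.sqrt_pos.mpr (hncpos c)
  let Dr := Matrix.diagonal fun c => Real.sqrt (nc c)
  have hNDr : Matrix.diagonal ν * Dr = 1 := by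
    rw [show Dr = Matrix.diagonal fun c => Real.sqrt (nc c) from rfl,
      Matrix.diagonal_mul_diagonal, ← Matrix.diagonal_one]
    exact congrArg Matrix.diagonal (funext fun c => inv_mul_cancel₀ (hsqrtpos c).ne')
  have hDnN : Matrix.diagonal nc * Matrix.diagonal ν = Dr := by
    rw [show Dr = Matrix.diagonal fun c => Real.sqrt (nc c) from rfl,
      Matrix.diagonal_mul_diagonal]
    refine congrArg Matrix.diagonal (funext fun c => ?_)
    show nc c * (Real.sqrt (nc c))⁻¹ = Real.sqrt (nc c)
    rw [← div_eq_mul_inv, div_eq_iff (hsqrtpos c).ne']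
    exact (Real.mul_self_sqrt (hncpos c).le).symm
  have hNDnN : Matrix.diagonal ν * Matrix.diagonal nc * Matrix.diagonal ν = 1 := by
    rw [Matrix.mul_assoc, hDnN, hNDr]
  let Df := Matrix.diagonal fd
  let Dq := Matrix.diagonal fun c => fd c * Jc c * fd c
  -- rewrite the normalized adjacency
  have hSAS : invSqrtDiag (degOf n M p) * A * invSqrtDiag (degOf n M p)
      = Z * (Df * G * Df) * Zᵀ - Matrix.diagonal ((fun c => fd c * Jc c * fd c) ∘ ψ) := by
    rw [hS, hAdecomp, Matrix.mul_sub, Matrix.sub_mul]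
    congr 1
    · rw [show Matrix.diagonal (fd ∘ ψ) * (Z * G * Zᵀ) * Matrix.diagonal (fd ∘ ψ)
          = (Matrix.diagonal (fd ∘ ψ) * Z) * (G * (Zᵀ * Matrix.diagonal (fd ∘ ψ))) by
        simp only [Matrix.mul_assoc]]
      rw [diag_mul_assign, assign_mul_diag]
      simp only [Matrix.mul_assoc]
      rfl
    · rw [hJeq, Matrix.diagonal_mul_diagonal, Matrix.diagonal_mul_diagonal]
      rfl
  -- Laplacian times Z
  have hLZ : lapOf n M p * Z
      = Z * (1 - Df * G * Df * Matrix.diagonal nc + Dq) := by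
    rw [show lapOf n M p
        = 1 - invSqrtDiag (degOf n M p) * adjOf n M p * invSqrtDiag (degOf n M p) from rfl,
      ← hAdef, hSAS, Matrix.sub_mul, Matrix.one_mul, Matrix.sub_mul, diag_mul_assign,
      show Z * (Df * G * Df) * Zᵀ * Z = Z * (Df * G * Df) * (Zᵀ * Z) by
        simp only [Matrix.mul_assoc],
      assign_T_mul_self, Matrix.mul_add, Matrix.mul_sub, Matrix.mul_one]
    simp only [Matrix.mul_assoc]
    abel
  let C := 1 - Dr * (Df * G * Df) * Dr + Dq
  have hNC : Matrix.diagonal ν * C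
      = (1 - Df * G * Df * Matrix.diagonal nc + Dq) * Matrix.diagonal ν := by
    rw [show C = 1 - Dr * (Df * G * Df) * Dr + Dq from rfl]
    rw [Matrix.mul_add, Matrix.mul_sub, Matrix.mul_one, Matrix.add_mul, Matrix.sub_mul,
      Matrix.one_mul]
    congr 1
    · congr 1
      rw [show Matrix.diagonal ν * (Dr * (Df * G * Df) * Dr)
          = (Matrix.diagonal ν * Dr) * ((Df * G * Df) * Dr) by simp only [Matrix.mul_assoc],
        hNDr, Matrix.one_mul,
        show Df * G * Df * Matrix.diagonal nc * Matrix.diagonal ν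
          = Df * G * Df * (Matrix.diagonal nc * Matrix.diagonal ν) by
          simp only [Matrix.mul_assoc],
        hDnN]
    · show Matrix.diagonal ν * Dq = Dq * Matrix.diagonal ν
      rw [show Dq = Matrix.diagonal fun c => fd c * Jc c * fd c from rfl,
        Matrix.diagonal_mul_diagonal, Matrix.diagonal_mul_diagonal]
      exact congrArg Matrix.diagonal (funext fun c => by ring)
  have hLZN : lapOf n M p * (Z * Matrix.diagonal ν) = (Z * Matrix.diagonal ν) * C := by
    rw [← Matrix.mul_assoc, hLZ, Matrix.mul_assoc, ← hNC, ← Matrix.mul_assoc]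
  -- C is hermitian
  have hCherm : C.IsHermitian := by
    show Cᴴ = C
    rw [Matrix.conjTranspose_eq_transpose_of_trivial]
    show (1 - Dr * (Df * G * Df) * Dr + Dq)ᵀ = 1 - Dr * (Df * G * Df) * Dr + Dq
    rw [Matrix.transpose_add, Matrix.transpose_sub, Matrix.transpose_one]
    have hGT : Gᵀ = G := by
      ext c c'; exact hGsym c' c
    rw [show Dq = Matrix.diagonal fun c => fd c * Jc c * fd c from rfl,
      show Dr = Matrix.diagonal fun c => Real.sqrt (nc c) from rfl,
      show Df = Matrix.diagonal fd from rfl]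
    simp only [Matrix.transpose_mul, Matrix.diagonal_transpose, hGT]
    simp only [Matrix.mul_assoc]
  -- spectral theorem
  let U : Matrix (Fin k) (Fin k) ℝ := hCherm.eigenvectorUnitary
  let Λ : Fin k → ℝ := hCherm.eigenvalues
  have hU1 : star U * U = 1 := Matrix.mem_unitaryGroup_iff'.mp (hCherm.eigenvectorUnitary).2
  have hU2 : U * star U = 1 := Matrix.mem_unitaryGroup_iff.mp (hCherm.eigenvectorUnitary).2
  have hUT : star U = Uᵀ := by
    rw [show star U = Uᴴ from rfl, Matrix.conjTranspose_eq_transpose_of_trivial]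
  have hspec : C = U * Matrix.diagonal Λ * star U := by
    have h := hCherm.spectral_theorem
    rwa [RCLike.ofReal_real_eq_id, Function.id_comp] at h
  have hCU : C * U = U * Matrix.diagonal Λ := by
    rw [hspec, Matrix.mul_assoc, Matrix.mul_assoc, hU1, Matrix.mul_one]
  -- orthonormality of Z N
  have hZN : (Z * Matrix.diagonal ν)ᵀ * (Z * Matrix.diagonal ν) = 1 := by
    rw [Matrix.transpose_mul, Matrix.diagonal_transpose,
      show Matrix.diagonal ν * Zᵀ * (Z * Matrix.diagonal ν)
        = Matrix.diagonal ν * (Zᵀ * Z) * Matrix.diagonal ν by simp only [Matrix.mul_assoc],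
      assign_T_mul_self]
    exact hNDnN
  refine ⟨G, J, U, Λ, hGherm, hJcls, hAdecomp, ?_, ?_, ?_, ?_⟩
  · rw [← hUT]; exact hU1
  · rw [← hUT]; exact hU2
  · rw [hNdef, Matrix.transpose_mul,
      show Uᵀ * (Z * Matrix.diagonal ν)ᵀ * (Z * Matrix.diagonal ν * U)
        = Uᵀ * ((Z * Matrix.diagonal ν)ᵀ * (Z * Matrix.diagonal ν)) * U by
        simp only [Matrix.mul_assoc],
      hZN, Matrix.mul_one, ← hUT]
    exact hU1
  · rw [hNdef, ← Matrix.mul_assoc, hLZN, Matrix.mul_assoc, hCU, ← Matrix.mul_assoc]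

end
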